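/- Let f : ℝ → ℝ be a 1-periodic function taking only the values −1 and +1, having only finitely many discontinuities in [0,1), and satisfying ∫₀¹ f(x) dx = 0. Then there exist T > 0 and continuous functions a, b : [0,T] → ℝ such that a(0) = b(0), a(t) ≤ b(t) ≤ a(t) + 1 for all t ∈ [0,T], ∫_{a(t)}^{b(t)} f(x) dx = 0 for all t ∈ [0,T], and b(T) = a(T) + 1. -/

import Mathlib

namespace MCC

def bd (e : Bool) : ℝ := if e then 1 else -1

lemma bd_pm (e : Bool) : bd e = 1 ∨ bd e = -1 := by cases e <;> simp [bd]
lemma bd_not (e : Bool) : bd (!e) = - bd e := by cases e <;> simp [bd]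
lemma bd_ne (e : Bool) : bd e ≠ 0 := by
  rcases bd_pm e with h | h <;> rw [h] <;> norm_num
lemma bd_mul_self (e : Bool) : bd e * bd e = 1 := by
  rcases bd_pm e with h | h <;> rw [h] <;> norm_num
lemma bd_t : bd true = 1 := rfl
lemma bd_f : bd false = -1 := rfl

/-- transition rule on the Bool model.  `cons e e'` : slope-consistency of the pair of
directions, `oka, okb` : direction stays (locally) inside the square. -/
def ruleCore (cons : Bool → Bool → Bool) (oka okb : Bool → Bool) (d : Bool × Bool) :
    Bool × Bool :=
  if cons d.1 d.2 && oka d.1 && okb d.2 then d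
  else if cons d.1 (!d.2) && oka d.1 && okb (!d.2) then (d.1, !d.2)
  else if cons (!d.1) d.2 && oka (!d.1) && okb d.2 then ((!d.1), d.2)
  else ((!d.1), (!d.2))

/-- constraints satisfied by real slope/blocking data -/
def Constraints (A B oka okb : Bool → Bool) : Prop :=
  (oka true || oka false) = true ∧ (okb true || okb false) = true ∧
  (oka true = false → (∀ e, A e = true) ∧ (∀ e, B e = true)) ∧
  (oka false = false → (∀ e, A e = false) ∧ (∀ e, B e = false)) ∧
  (okb false = false → (∀ e, A e = true) ∧ (∀ e, B e = true)) ∧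
  (okb true = false → (∀ e, A e = false) ∧ (∀ e, B e = false))

instance (A B oka okb : Bool → Bool) : Decidable (Constraints A B oka okb) := by
  unfold Constraints; infer_instance

/-- arrivability of incoming direction `d` at the point -/
def Arr (A B oka okb : Bool → Bool) (d : Bool × Bool) : Prop :=
  A (!d.1) = B (!d.2) ∧ oka (!d.1) = true ∧ okb (!d.2) = true

instance (A B oka okb : Bool → Bool) (d : Bool × Bool) : Decidable (Arr A B oka okb d) := by
  unfold Arr; infer_instance

lemma ruleCore_valid : ∀ A B oka okb : Bool → Bool, ∀ d : Bool × Bool,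
    Constraints A B oka okb → Arr A B oka okb d →
    (A (ruleCore (fun e e' => A e == B e') oka okb d).1
      = B (ruleCore (fun e e' => A e == B e') oka okb d).2) ∧
    oka (ruleCore (fun e e' => A e == B e') oka okb d).1 = true ∧
    okb (ruleCore (fun e e' => A e == B e') oka okb d).2 = true := by decide

lemma ruleCore_rev : ∀ A B oka okb : Bool → Bool, ∀ d : Bool × Bool,
    Constraints A B oka okb → Arr A B oka okb d →
    ruleCore (fun e e' => A e == B e') oka okb
      (!(ruleCore (fun e e' => A e == B e') oka okb d).1,
       !(ruleCore (fun e e' => A e == B e') oka okb d).2) = (!d.1, !d.2) := by decide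

lemma ruleCore_class_bool : ∀ A B oka okb : Bool → Bool, ∀ d : Bool × Bool,
    Constraints A B oka okb → Arr A B oka okb d →
    ruleCore (fun e e' => A e == B e') oka okb d = (!d.1, !d.2) →
    ((!(oka true) && !(okb false)) || (!(oka false) && !(okb true))) = true := by decide

lemma ruleCore_class (A B oka okb : Bool → Bool) (d : Bool × Bool)
    (hc : Constraints A B oka okb) (ha : Arr A B oka okb d)
    (hr : ruleCore (fun e e' => A e == B e') oka okb d = (!d.1, !d.2)) :
    (oka true = false ∧ okb false = false) ∨ (oka false = false ∧ okb true = false) := by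
  have h := ruleCore_class_bool A B oka okb d hc ha hr
  rcases Bool.or_eq_true_iff.mp h with h | h <;>
    simp only [Bool.and_eq_true, Bool.not_eq_true'] at h
  · exact Or.inl h
  · exact Or.inr h


/-- A zigzag structure: `F` is affine with slopes `±1` on intervals avoiding `S`,
`S` is locally finite, `1`-periodic and nonempty. -/
structure ZZ where
  F : ℝ → ℝ
  S : Set ℝ
  anchor : ℝ
  anchorS : anchor ∈ S
  fin : ∀ x y : ℝ, (S ∩ Set.Icc x y).Finite
  per : ∀ x, x ∈ S ↔ x + 1 ∈ S
  aff : ∀ x y : ℝ, x < y → S ∩ Set.Ioo x y = ∅ →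
        ∃ σ : ℝ, (σ = 1 ∨ σ = -1) ∧ ∀ z ∈ Set.Icc x y, F z = F x + σ * (z - x)

namespace ZZ

variable (Z : ZZ)

lemma shift_mem (n : ℤ) {x : ℝ} (hx : x ∈ Z.S) : x + n ∈ Z.S := by
  induction n using Int.induction_on with
  | zero => simpa using hx
  | succ k ih =>
      have h2 := (Z.per (x + k)).1 ih
      have : x + ((k : ℤ) + 1 : ℤ) = x + (k : ℝ) + 1 := by push_cast; ring
      rw [this]; exact h2
  | pred k ih =>
      have h2 := (Z.per (x + (-(k : ℤ) - 1 : ℤ))).2 (by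
        have : x + (-(k : ℤ) - 1 : ℤ) + 1 = x + (-(k : ℤ) : ℤ) := by push_cast; ring
        rw [this]; exact ih)
      have : x + (-(k : ℤ) - 1 : ℤ) = x + ((-(k : ℤ)) - 1 : ℤ) := by norm_num
      exact h2

lemma exists_above (x : ℝ) : ∃ y ∈ Z.S, x < y ∧ y ≤ x + 1 := by
  refine ⟨Z.anchor + (⌊x - Z.anchor⌋ + 1 : ℤ), Z.shift_mem _ Z.anchorS, ?_, ?_⟩
  · push_cast
    have := Int.lt_floor_add_one (x - Z.anchor)
    linarith
  · push_cast
    have := Int.floor_le (x - Z.anchor)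
    linarith

lemma exists_below (x : ℝ) : ∃ y ∈ Z.S, y < x ∧ x - 1 ≤ y := by
  refine ⟨Z.anchor + (⌈x - Z.anchor⌉ - 1 : ℤ), Z.shift_mem _ Z.anchorS, ?_, ?_⟩
  · push_cast
    have := Int.ceil_lt_add_one (x - Z.anchor)
    linarith
  · push_cast
    have := Int.le_ceil (x - Z.anchor)
    linarith

lemma exists_delta (x : ℝ) (e : Bool) :
    ∃ d : ℝ, 0 < d ∧ d ≤ 1 ∧ x + bd e * d ∈ Z.S ∧
      ∀ d', 0 < d' → d' < d → x + bd e * d' ∉ Z.S := by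
  have hCsub : {d : ℝ | 0 < d ∧ d ≤ 1 ∧ x + bd e * d ∈ Z.S} ⊆
      (fun y => bd e * (y - x)) '' (Z.S ∩ Set.Icc (x - 1) (x + 1)) := by
    rintro d ⟨hd0, hd1, hdS⟩
    refine ⟨x + bd e * d, ⟨hdS, ?_⟩, ?_⟩
    · rcases bd_pm e with h | h <;> rw [h] at * <;> constructor <;> nlinarith
    · have := bd_mul_self e; ring_nf; nlinarith [bd_mul_self e]
  have hCfin : {d : ℝ | 0 < d ∧ d ≤ 1 ∧ x + bd e * d ∈ Z.S}.Finite :=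
    Set.Finite.subset (Set.Finite.image _ (Z.fin _ _)) hCsub
  have hCne : {d : ℝ | 0 < d ∧ d ≤ 1 ∧ x + bd e * d ∈ Z.S}.Nonempty := by
    cases e
    · obtain ⟨y, hyS, hy1, hy2⟩ := Z.exists_below x
      refine ⟨x - y, by linarith, by linarith, ?_⟩
      have : x + bd false * (x - y) = y := by norm_num [bd]
      rw [this]; exact hyS
    · obtain ⟨y, hyS, hy1, hy2⟩ := Z.exists_above x
      refine ⟨y - x, by linarith, by linarith, ?_⟩
      have : x + bd true * (y - x) = y := by simp [bd]
      rw [this]; exact hyS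
  obtain ⟨d, hdC, hmin⟩ := Set.exists_min_image _ id hCfin hCne
  refine ⟨d, hdC.1, hdC.2.1, hdC.2.2, fun d' h0 h1 hS => ?_⟩
  have : d ≤ d' := hmin d' ⟨h0, by linarith [hdC.2.1], hS⟩
  linarith

noncomputable def delta (x : ℝ) (e : Bool) : ℝ := (Z.exists_delta x e).choose

lemma delta_pos (x : ℝ) (e : Bool) : 0 < Z.delta x e := (Z.exists_delta x e).choose_spec.1
lemma delta_le_one (x : ℝ) (e : Bool) : Z.delta x e ≤ 1 :=
  (Z.exists_delta x e).choose_spec.2.1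
lemma delta_memS (x : ℝ) (e : Bool) : x + bd e * Z.delta x e ∈ Z.S :=
  (Z.exists_delta x e).choose_spec.2.2.1
lemma delta_not (x : ℝ) (e : Bool) :
    ∀ d', 0 < d' → d' < Z.delta x e → x + bd e * d' ∉ Z.S :=
  (Z.exists_delta x e).choose_spec.2.2.2
lemma delta_le (x : ℝ) (e : Bool) {d : ℝ} (h0 : 0 < d) (hS : x + bd e * d ∈ Z.S) :
    Z.delta x e ≤ d := by
  by_contra h
  exact Z.delta_not x e d h0 (by linarith) hS

lemma exists_slope (x : ℝ) (e : Bool) :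
    ∃ σ : ℝ, (σ = 1 ∨ σ = -1) ∧
      ∀ s : ℝ, 0 ≤ s → s ≤ Z.delta x e → Z.F (x + bd e * s) = Z.F x + σ * (bd e * s) := by
  have hδ := Z.delta_pos x e
  cases e
  · -- bd false = -1 : use interval (x - δ, x)
    obtain ⟨σ, hσpm, hσ⟩ := Z.aff (x - Z.delta x false) x (by linarith) (by
      ext z; simp only [Set.mem_inter_iff, Set.mem_Ioo, Set.mem_empty_iff_false, iff_false,
        not_and, and_imp]
      intro hzS h1 h2
      exact Z.delta_not x false (x - z) (by linarith) (by linarith)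
        (by rw [show x + bd false * (x - z) = z by rw [bd_f]; ring]; exact hzS))
    have hx : Z.F x = Z.F (x - Z.delta x false) + σ * (Z.delta x false) := by
      have := hσ x ⟨by linarith, le_refl x⟩; rw [this]; ring_nf
    refine ⟨σ, hσpm, fun s h0 h1 => ?_⟩
    have hz := hσ (x - s) ⟨by linarith, by linarith⟩
    rw [show x + bd false * s = x - s by rw [bd_f]; ring]
    rw [hz]
    rw [show bd false * s = -s by rw [bd_f]; ring]
    linarith [hx]
  · obtain ⟨σ, hσpm, hσ⟩ := Z.aff x (x + Z.delta x true) (by linarith) (by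
      ext z; simp only [Set.mem_inter_iff, Set.mem_Ioo, Set.mem_empty_iff_false, iff_false,
        not_and, and_imp]
      intro hzS h1 h2
      exact Z.delta_not x true (z - x) (by linarith) (by linarith)
        (by rw [show x + bd true * (z - x) = z by rw [bd_t]; ring]; exact hzS))
    refine ⟨σ, hσpm, fun s h0 h1 => ?_⟩
    have hz := hσ (x + s) ⟨by linarith, by linarith⟩
    rw [show x + bd true * s = x + s by rw [bd_t]; ring]
    rw [hz]
    rw [show bd true * s = s by rw [bd_t]; ring]
    ring_nf

noncomputable def slope (x : ℝ) (e : Bool) : ℝ := (Z.exists_slope x e).choose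

lemma slope_pm (x : ℝ) (e : Bool) : Z.slope x e = 1 ∨ Z.slope x e = -1 :=
  (Z.exists_slope x e).choose_spec.1
lemma slope_ne (x : ℝ) (e : Bool) : Z.slope x e ≠ 0 := by
  rcases Z.slope_pm x e with h | h <;> rw [h] <;> norm_num
lemma slope_spec (x : ℝ) (e : Bool) :
    ∀ s : ℝ, 0 ≤ s → s ≤ Z.delta x e → Z.F (x + bd e * s) = Z.F x + Z.slope x e * (bd e * s) :=
  (Z.exists_slope x e).choose_spec.2

/-- the slope looking back from inside/endpoint of a gap agrees with the slope looking
forward from its start. -/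
lemma slope_flip (x : ℝ) (e : Bool) {t : ℝ} (h0 : 0 < t) (h1 : t ≤ Z.delta x e) :
    Z.slope (x + bd e * t) (!e) = Z.slope x e := by
  set y := x + bd e * t with hy
  set s := min t (Z.delta y (!e)) with hs
  have hδ' := Z.delta_pos y (!e)
  have hs0 : 0 < s := lt_min h0 hδ'
  have hs1 : s ≤ t := min_le_left _ _
  have h2 : Z.F (y + bd (!e) * s) = Z.F y + Z.slope y (!e) * (bd (!e) * s) :=
    Z.slope_spec y (!e) s (le_of_lt hs0) (min_le_right _ _)
  have h3 : y + bd (!e) * s = x + bd e * (t - s) := by rw [bd_not, hy]; ring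
  have h4 : Z.F (x + bd e * (t - s)) = Z.F x + Z.slope x e * (bd e * (t - s)) :=
    Z.slope_spec x e (t - s) (by linarith) (by linarith)
  have h5 : Z.F y = Z.F x + Z.slope x e * (bd e * t) :=
    Z.slope_spec x e t (le_of_lt h0) h1
  rw [h3, h4, h5, bd_not] at h2
  have h6 : Z.slope y (!e) * (bd e * s) = Z.slope x e * (bd e * s) := by linear_combination h2
  have h7 : bd e * s ≠ 0 := mul_ne_zero (bd_ne e) (ne_of_gt hs0)
  exact mul_right_cancel₀ h7 h6

/-- level sets of `F` on compact intervals are finite. -/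
lemma level_finite (lo hi c : ℝ) : {x : ℝ | x ∈ Set.Icc lo hi ∧ Z.F x = c}.Finite := by
  classical
  set L := {x : ℝ | x ∈ Set.Icc lo hi ∧ Z.F x = c} with hL
  set g : ℝ → ℝ := fun x => if x ∈ Z.S then x else x + bd true * Z.delta x true with hg
  have hgS : ∀ x, g x ∈ Z.S := by
    intro x; rw [hg]; dsimp only
    split
    · assumption
    · exact Z.delta_memS x true
  have hgmono : ∀ x, x ≤ g x ∧ g x ≤ x + 1 := by
    intro x; rw [hg]; dsimp only
    split
    · constructor <;> simp
    · have := Z.delta_pos x true; have := Z.delta_le_one x true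
      constructor <;> simp [bd] <;> linarith
  have key : ∀ u v, u ∈ L → v ∈ L → u ≤ v → g u = g v → u = v := by
    intro u v hu hv huv hguv
    by_cases huS : u ∈ Z.S
    · have hgu : g u = u := by rw [hg]; simp only [huS, if_pos]
      have h2 : v ≤ g v := (hgmono v).1
      rw [← hguv, hgu] at h2
      exact le_antisymm huv h2
    · have hgu : g u = u + bd true * Z.delta u true := by rw [hg]; simp only [huS, if_neg, if_false]
      have h2 : v ≤ u + bd true * Z.delta u true := by
        rw [← hgu, hguv]; exact (hgmono v).1
      rw [bd_t, one_mul] at h2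
      have h3 := Z.slope_spec u true (v - u) (by linarith) (by linarith)
      rw [show u + bd true * (v - u) = v by rw [bd_t]; ring] at h3
      have h4 : Z.slope u true * (bd true * (v - u)) = 0 := by
        rw [hu.2, hv.2] at h3; linarith
      rw [bd_t, one_mul] at h4
      rcases mul_eq_zero.mp h4 with h | h
      · exact absurd h (Z.slope_ne u true)
      · linarith
  have hinj : Set.InjOn g L := by
    intro a ha b hb hab
    rcases le_total a b with h | h
    · exact key a b ha hb h hab
    · exact (key b a hb ha h hab.symm).symm
  have : L ⊆ g ⁻¹' (Z.S ∩ Set.Icc lo (hi + 1)) := by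
    intro x hx
    refine ⟨hgS x, ?_, ?_⟩
    · linarith [(hgmono x).1, hx.1.1]
    · linarith [(hgmono x).2, hx.1.2]
  exact Set.Finite.of_finite_image (Set.Finite.subset (Z.fin lo (hi+1)) (by
    rintro y ⟨x, hxL, rfl⟩
    exact ⟨hgS x, by linarith [(hgmono x).1, hxL.1.1], by linarith [(hgmono x).2, hxL.1.2]⟩)) hinj

end ZZ

/-- state of the billiard -/
@[ext] structure St where
  a : ℝ
  b : ℝ
  ea : Bool
  eb : Bool

/-- A zigzag on the circle together with the data of a global min `q`, global max `r`. -/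
structure Sq where
  Z : ZZ
  q : ℝ
  r : ℝ
  m : ℝ
  M : ℝ
  qS : q ∈ Z.S
  rS : r ∈ Z.S
  hqr : q < r
  hrq : r < q + 1
  bound : ∀ x, m ≤ Z.F x ∧ Z.F x ≤ M
  Fq : Z.F q = m
  Fr : Z.F r = M
  Fr1 : Z.F (r - 1) = M

namespace Sq

variable (W : Sq)

lemma r1S : W.r - 1 ∈ W.Z.S := by
  have := (W.Z.per (W.r - 1)).2
  rw [sub_add_cancel] at this
  exact this W.rS

lemma slope_min {x : ℝ} (hx : W.Z.F x = W.m) (e : Bool) : W.Z.slope x e * bd e = 1 := by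
  have hδ := W.Z.delta_pos x e
  have h := W.Z.slope_spec x e (W.Z.delta x e) (le_of_lt hδ) le_rfl
  have hb := (W.bound (x + bd e * W.Z.delta x e)).1
  rw [h, hx] at hb
  have h2 : 0 ≤ W.Z.slope x e * bd e * W.Z.delta x e := by nlinarith [hb]
  have h3 : 0 ≤ W.Z.slope x e * bd e := nonneg_of_mul_nonneg_right (by linarith [h2] : (0:ℝ) ≤ W.Z.delta x e * (W.Z.slope x e * bd e)) hδ
  rcases W.Z.slope_pm x e with h4 | h4 <;> rcases bd_pm e with h5 | h5 <;>
    rw [h4, h5] at h3 ⊢ <;> linarith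

lemma slope_max {x : ℝ} (hx : W.Z.F x = W.M) (e : Bool) : W.Z.slope x e * bd e = -1 := by
  have hδ := W.Z.delta_pos x e
  have h := W.Z.slope_spec x e (W.Z.delta x e) (le_of_lt hδ) le_rfl
  have hb := (W.bound (x + bd e * W.Z.delta x e)).2
  rw [h, hx] at hb
  have h2 : W.Z.slope x e * bd e * W.Z.delta x e ≤ 0 := by nlinarith [hb]
  have h3 : W.Z.slope x e * bd e ≤ 0 := nonpos_of_mul_nonpos_right (by linarith [h2] : W.Z.delta x e * (W.Z.slope x e * bd e) ≤ (0:ℝ)) hδ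
  rcases W.Z.slope_pm x e with h4 | h4 <;> rcases bd_pm e with h5 | h5 <;>
    rw [h4, h5] at h3 ⊢ <;> linarith

lemma prod_pm (x : ℝ) (e : Bool) : W.Z.slope x e * bd e = 1 ∨ W.Z.slope x e * bd e = -1 := by
  rcases W.Z.slope_pm x e with h4 | h4 <;> rcases bd_pm e with h5 | h5 <;>
    rw [h4, h5] <;> norm_num

def OkA (x : ℝ) (e : Bool) : Prop := cond e (x < W.q) (W.r - 1 < x)
def OkB (x : ℝ) (e : Bool) : Prop := cond e (x < W.r) (W.q < x)

open Classical in
noncomputable def Ab (x : ℝ) (e : Bool) : Bool := if W.Z.slope x e * bd e = 1 then true else false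
open Classical in
noncomputable def okaB (x : ℝ) (e : Bool) : Bool := if W.OkA x e then true else false
open Classical in
noncomputable def okbB (x : ℝ) (e : Bool) : Bool := if W.OkB x e then true else false

lemma Ab_true_iff {x : ℝ} {e : Bool} : W.Ab x e = true ↔ W.Z.slope x e * bd e = 1 := by
  unfold Ab; split <;> simp_all
lemma Ab_false_iff {x : ℝ} {e : Bool} : W.Ab x e = false ↔ W.Z.slope x e * bd e = -1 := by
  unfold Ab; split <;> simp_all
  · intro h; rw [h] at *; norm_num at *
  · rcases W.prod_pm x e with h | h <;> simp_all
lemma okaB_true_iff {x : ℝ} {e : Bool} : W.okaB x e = true ↔ W.OkA x e := by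
  unfold okaB; split <;> simp_all
lemma okbB_true_iff {x : ℝ} {e : Bool} : W.okbB x e = true ↔ W.OkB x e := by
  unfold okbB; split <;> simp_all

lemma okaB_false_iff {x : ℝ} {e : Bool} : W.okaB x e = false ↔ ¬ W.OkA x e := by
  unfold okaB; split <;> simp_all
lemma okbB_false_iff {x : ℝ} {e : Bool} : W.okbB x e = false ↔ ¬ W.OkB x e := by
  unfold okbB; split <;> simp_all

lemma Ab_eq_iff {x y : ℝ} {e e' : Bool} :
    W.Ab x e = W.Ab y e' ↔ W.Z.slope x e * bd e = W.Z.slope y e' * bd e' := by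
  constructor
  · intro h
    cases hxy : W.Ab x e
    · rw [hxy] at h
      rw [(W.Ab_false_iff).1 hxy, (W.Ab_false_iff).1 h.symm]
    · rw [hxy] at h
      rw [(W.Ab_true_iff).1 hxy, (W.Ab_true_iff).1 h.symm]
  · intro h
    cases hxy : W.Ab x e
    · have := (W.Ab_false_iff).1 hxy
      rw [this] at h
      exact ((W.Ab_false_iff).2 h.symm).symm
    · have := (W.Ab_true_iff).1 hxy
      rw [this] at h
      exact ((W.Ab_true_iff).2 h.symm).symm

/-- validity invariant of a billiard state -/
def V (s : St) : Prop :=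
  W.r - 1 ≤ s.a ∧ s.a ≤ W.q ∧ W.q ≤ s.b ∧ s.b ≤ W.r ∧
  W.Z.F s.a = W.Z.F s.b ∧ W.OkA s.a s.ea ∧ W.OkB s.b s.eb ∧
  W.Z.slope s.a s.ea * bd s.ea = W.Z.slope s.b s.eb * bd s.eb ∧
  (s.a ∈ W.Z.S ∨ s.b ∈ W.Z.S)

noncomputable def tau (s : St) : ℝ := min (W.Z.delta s.a s.ea) (W.Z.delta s.b s.eb)

lemma tau_pos (s : St) : 0 < W.tau s :=
  lt_min (W.Z.delta_pos _ _) (W.Z.delta_pos _ _)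
lemma tau_le_a (s : St) : W.tau s ≤ W.Z.delta s.a s.ea := min_le_left _ _
lemma tau_le_b (s : St) : W.tau s ≤ W.Z.delta s.b s.eb := min_le_right _ _

noncomputable def Pa (s : St) : ℝ := s.a + bd s.ea * W.tau s
noncomputable def Pb (s : St) : ℝ := s.b + bd s.eb * W.tau s

lemma delta_le_qa {s : St} (hV : W.V s) (he : s.ea = true) :
    W.Z.delta s.a s.ea ≤ W.q - s.a := by
  have h1 : s.a < W.q := by have := hV.2.2.2.2.2.1; rw [OkA, he] at this; exact this
  refine W.Z.delta_le s.a s.ea (by linarith) ?_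
  rw [he, bd_t]
  rw [show s.a + 1 * (W.q - s.a) = W.q by ring]
  exact W.qS

lemma delta_le_ar {s : St} (hV : W.V s) (he : s.ea = false) :
    W.Z.delta s.a s.ea ≤ s.a - (W.r - 1) := by
  have h1 : W.r - 1 < s.a := by have := hV.2.2.2.2.2.1; rw [OkA, he] at this; exact this
  refine W.Z.delta_le s.a s.ea (by linarith) ?_
  rw [he, bd_f]
  rw [show s.a + -1 * (s.a - (W.r - 1)) = W.r - 1 by ring]
  exact W.r1S

lemma delta_le_rb {s : St} (hV : W.V s) (he : s.eb = true) :
    W.Z.delta s.b s.eb ≤ W.r - s.b := by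
  have h1 : s.b < W.r := by have := hV.2.2.2.2.2.2.1; rw [OkB, he] at this; exact this
  refine W.Z.delta_le s.b s.eb (by linarith) ?_
  rw [he, bd_t]
  rw [show s.b + 1 * (W.r - s.b) = W.r by ring]
  exact W.rS

lemma delta_le_bq {s : St} (hV : W.V s) (he : s.eb = false) :
    W.Z.delta s.b s.eb ≤ s.b - W.q := by
  have h1 : W.q < s.b := by have := hV.2.2.2.2.2.2.1; rw [OkB, he] at this; exact this
  refine W.Z.delta_le s.b s.eb (by linarith) ?_
  rw [he, bd_f]
  rw [show s.b + -1 * (s.b - W.q) = W.q by ring]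
  exact W.qS

lemma movA {s : St} (hV : W.V s) {u : ℝ} (h0 : 0 ≤ u) (h1 : u ≤ W.tau s) :
    W.r - 1 ≤ s.a + bd s.ea * u ∧ s.a + bd s.ea * u ≤ W.q := by
  have hta := W.tau_le_a s
  cases he : s.ea
  · have := W.delta_le_ar hV he
    rw [he] at this hta
    rw [bd_f]
    constructor <;> [linarith; linarith [hV.2.1]]
  · have := W.delta_le_qa hV he
    rw [he] at this hta
    rw [bd_t]
    constructor <;> [linarith [hV.1]; linarith]

lemma movB {s : St} (hV : W.V s) {u : ℝ} (h0 : 0 ≤ u) (h1 : u ≤ W.tau s) :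
    W.q ≤ s.b + bd s.eb * u ∧ s.b + bd s.eb * u ≤ W.r := by
  have htb := W.tau_le_b s
  cases he : s.eb
  · have := W.delta_le_bq hV he
    rw [he] at this htb
    rw [bd_f]
    constructor <;> [linarith; linarith [hV.2.2.2.1]]
  · have := W.delta_le_rb hV he
    rw [he] at this htb
    rw [bd_t]
    constructor <;> [linarith [hV.2.2.1]; linarith]

lemma movFA {s : St} (hV : W.V s) {u : ℝ} (h0 : 0 ≤ u) (h1 : u ≤ W.tau s) :
    W.Z.F (s.a + bd s.ea * u) = W.Z.F s.a + (W.Z.slope s.a s.ea * bd s.ea) * u := by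
  have := W.Z.slope_spec s.a s.ea u h0 (le_trans h1 (W.tau_le_a s))
  rw [this]; ring

lemma movFB {s : St} (hV : W.V s) {u : ℝ} (h0 : 0 ≤ u) (h1 : u ≤ W.tau s) :
    W.Z.F (s.b + bd s.eb * u) = W.Z.F s.b + (W.Z.slope s.a s.ea * bd s.ea) * u := by
  have := W.Z.slope_spec s.b s.eb u h0 (le_trans h1 (W.tau_le_b s))
  rw [this, hV.2.2.2.2.2.2.2.1]; ring

lemma movF {s : St} (hV : W.V s) {u : ℝ} (h0 : 0 ≤ u) (h1 : u ≤ W.tau s) :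
    W.Z.F (s.a + bd s.ea * u) = W.Z.F (s.b + bd s.eb * u) := by
  rw [W.movFA hV h0 h1, W.movFB hV h0 h1, hV.2.2.2.2.1]

lemma FP {s : St} (hV : W.V s) : W.Z.F (W.Pa s) = W.Z.F (W.Pb s) :=
  W.movF hV (le_of_lt (W.tau_pos s)) le_rfl

lemma PS (s : St) : W.Pa s ∈ W.Z.S ∨ W.Pb s ∈ W.Z.S := by
  rcases min_cases (W.Z.delta s.a s.ea) (W.Z.delta s.b s.eb) with ⟨h, _⟩ | ⟨h, _⟩
  · left; rw [Pa, tau, h]; exact W.Z.delta_memS s.a s.ea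
  · right; rw [Pb, tau, h]; exact W.Z.delta_memS s.b s.eb

noncomputable def Tdir (s : St) : Bool × Bool :=
  ruleCore (fun e e' => W.Ab (W.Pa s) e == W.Ab (W.Pb s) e')
    (fun e => W.okaB (W.Pa s) e) (fun e => W.okbB (W.Pb s) e) (s.ea, s.eb)

noncomputable def Tst (s : St) : St := ⟨W.Pa s, W.Pb s, (W.Tdir s).1, (W.Tdir s).2⟩

lemma mM : W.m < W.M := by
  have h1 : W.m ≤ W.M := by
    have := W.bound W.q; linarith [this.1, this.2]
  rcases lt_or_eq_of_le h1 with h | h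
  · exact h
  · exfalso
    have hδ := W.Z.delta_pos W.q true
    have hs := W.Z.slope_spec W.q true (W.Z.delta W.q true) (le_of_lt hδ) le_rfl
    have hb := W.bound (W.q + bd true * W.Z.delta W.q true)
    rw [hs, W.Fq] at hb
    rw [bd_t, one_mul] at hb
    have : W.Z.slope W.q true * W.Z.delta W.q true = 0 := by
      rcases hb with ⟨hb1, hb2⟩; rw [← h] at hb2; linarith
    rcases mul_eq_zero.mp this with h2 | h2
    · exact W.Z.slope_ne _ _ h2
    · linarith

lemma constraints_at {s : St} (hV : W.V s) :
    Constraints (fun e => W.Ab (W.Pa s) e) (fun e => W.Ab (W.Pb s) e)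
      (fun e => W.okaB (W.Pa s) e) (fun e => W.okbB (W.Pb s) e) := by
  have hbdA : W.r - 1 ≤ W.Pa s ∧ W.Pa s ≤ W.q := W.movA hV (le_of_lt (W.tau_pos s)) le_rfl
  have hbdB : W.q ≤ W.Pb s ∧ W.Pb s ≤ W.r := W.movB hV (le_of_lt (W.tau_pos s)) le_rfl
  have hFP := W.FP hV
  constructor
  · -- oka true || oka false
    rw [Bool.or_eq_true]
    by_contra h
    push_neg at h
    obtain ⟨h1, h2⟩ := h
    have g1 : ¬ W.OkA (W.Pa s) true := fun hh => h1 ((W.okaB_true_iff).2 hh)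
    have g2 : ¬ W.OkA (W.Pa s) false := fun hh => h2 ((W.okaB_true_iff).2 hh)
    rw [OkA] at g1 g2
    simp only [cond_true, cond_false, not_lt] at g1 g2
    have := W.hrq
    linarith [hbdA.2]
  constructor
  · rw [Bool.or_eq_true]
    by_contra h
    push_neg at h
    obtain ⟨h1, h2⟩ := h
    have g1 : ¬ W.OkB (W.Pb s) true := fun hh => h1 ((W.okbB_true_iff).2 hh)
    have g2 : ¬ W.OkB (W.Pb s) false := fun hh => h2 ((W.okbB_true_iff).2 hh)
    rw [OkB] at g1 g2
    simp only [cond_true, cond_false, not_lt] at g1 g2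
    have := W.hqr
    linarith
  have minc : ∀ x : ℝ, W.Z.F x = W.m → ∀ e, W.Ab x e = true :=
    fun x hx e => (W.Ab_true_iff).2 (W.slope_min hx e)
  have maxc : ∀ x : ℝ, W.Z.F x = W.M → ∀ e, W.Ab x e = false :=
    fun x hx e => (W.Ab_false_iff).2 (W.slope_max hx e)
  refine ⟨?_, ?_, ?_, ?_⟩
  · -- oka true = false : Pa s = q, value m
    intro h
    have g1 : ¬ W.OkA (W.Pa s) true := (W.okaB_false_iff).1 h
    rw [OkA, cond_true, not_lt] at g1
    have hPa : W.Z.F (W.Pa s) = W.m := by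
      rw [show W.Pa s = W.q from le_antisymm hbdA.2 g1]; exact W.Fq
    exact ⟨minc _ hPa, minc _ (hFP ▸ hPa)⟩
  · -- oka false = false : Pa s = r - 1, value M
    intro h
    have g1 : ¬ W.OkA (W.Pa s) false := (W.okaB_false_iff).1 h
    rw [OkA, cond_false, not_lt] at g1
    have hPa : W.Z.F (W.Pa s) = W.M := by
      rw [show W.Pa s = W.r - 1 from le_antisymm g1 hbdA.1]; exact W.Fr1
    exact ⟨maxc _ hPa, maxc _ (hFP ▸ hPa)⟩
  · -- okb false = false : Pb s = q, value m
    intro h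
    have g1 : ¬ W.OkB (W.Pb s) false := (W.okbB_false_iff).1 h
    rw [OkB, cond_false, not_lt] at g1
    have hPb : W.Z.F (W.Pb s) = W.m := by
      rw [show W.Pb s = W.q from le_antisymm g1 hbdB.1]; exact W.Fq
    exact ⟨minc _ (hFP.symm ▸ hPb), minc _ hPb⟩
  · -- okb true = false : Pb s = r, value M
    intro h
    have g1 : ¬ W.OkB (W.Pb s) true := (W.okbB_false_iff).1 h
    rw [OkB, cond_true, not_lt] at g1
    have hPb : W.Z.F (W.Pb s) = W.M := by
      rw [show W.Pb s = W.r from le_antisymm hbdB.2 g1]; exact W.Fr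
    exact ⟨maxc _ (hFP.symm ▸ hPb), maxc _ hPb⟩

/-- the reversed incoming direction is a valid outgoing direction at the endpoint -/
lemma arr_at {s : St} (hV : W.V s) :
    Arr (fun e => W.Ab (W.Pa s) e) (fun e => W.Ab (W.Pb s) e)
      (fun e => W.okaB (W.Pa s) e) (fun e => W.okbB (W.Pb s) e) (s.ea, s.eb) := by
  have htp := W.tau_pos s
  refine ⟨?_, ?_, ?_⟩
  · -- slope consistency of reversed directions
    show W.Ab (W.Pa s) (!s.ea) = W.Ab (W.Pb s) (!s.eb)
    rw [W.Ab_eq_iff]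
    have hA : W.Z.slope (W.Pa s) (!s.ea) = W.Z.slope s.a s.ea :=
      W.Z.slope_flip s.a s.ea htp (W.tau_le_a s)
    have hB : W.Z.slope (W.Pb s) (!s.eb) = W.Z.slope s.b s.eb :=
      W.Z.slope_flip s.b s.eb htp (W.tau_le_b s)
    rw [hA, hB, bd_not, bd_not]
    have := hV.2.2.2.2.2.2.2.1
    ring_nf
    linarith [this]
  · show W.okaB (W.Pa s) (!s.ea) = true
    rw [W.okaB_true_iff]
    cases he : s.ea
    · -- moving left, so Pa < a ≤ q ; reversed direction is true
      rw [Bool.not_false, OkA, cond_true]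
      have : W.Pa s = s.a + bd false * W.tau s := by rw [Pa, he]
      rw [this, bd_f]
      have := hV.2.1
      linarith
    · rw [Bool.not_true, OkA, cond_false]
      have : W.Pa s = s.a + bd true * W.tau s := by rw [Pa, he]
      rw [this, bd_t]
      have := hV.1
      linarith
  · show W.okbB (W.Pb s) (!s.eb) = true
    rw [W.okbB_true_iff]
    cases he : s.eb
    · rw [Bool.not_false, OkB, cond_true]
      have : W.Pb s = s.b + bd false * W.tau s := by rw [Pb, he]
      rw [this, bd_f]
      have := hV.2.2.2.1
      linarith
    · rw [Bool.not_true, OkB, cond_false]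
      have : W.Pb s = s.b + bd true * W.tau s := by rw [Pb, he]
      rw [this, bd_t]
      have := hV.2.2.1
      linarith

lemma V_Tst {s : St} (hV : W.V s) : W.V (W.Tst s) := by
  have hval := ruleCore_valid (fun e => W.Ab (W.Pa s) e) (fun e => W.Ab (W.Pb s) e)
    (fun e => W.okaB (W.Pa s) e) (fun e => W.okbB (W.Pb s) e) (s.ea, s.eb)
    (W.constraints_at hV) (W.arr_at hV)
  have hbdA : W.r - 1 ≤ W.Pa s ∧ W.Pa s ≤ W.q := W.movA hV (le_of_lt (W.tau_pos s)) le_rfl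
  have hbdB : W.q ≤ W.Pb s ∧ W.Pb s ≤ W.r := W.movB hV (le_of_lt (W.tau_pos s)) le_rfl
  refine ⟨hbdA.1, hbdA.2, hbdB.1, hbdB.2, W.FP hV, ?_, ?_, ?_, W.PS s⟩
  · exact (W.okaB_true_iff).1 hval.2.1
  · exact (W.okbB_true_iff).1 hval.2.2
  · exact (W.Ab_eq_iff).1 hval.1

/-- time-reversed state at the endpoint -/
noncomputable def Dst (s : St) : St := ⟨W.Pa s, W.Pb s, !s.ea, !s.eb⟩

lemma tau_Dst {s : St} (hV : W.V s) : W.tau (W.Dst s) = W.tau s := by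
  have htp := W.tau_pos s
  have hgeA : W.tau s ≤ W.Z.delta (W.Pa s) (!s.ea) := by
    by_contra h
    push_neg at h
    have hd := W.Z.delta_pos (W.Pa s) (!s.ea)
    have hmem := W.Z.delta_memS (W.Pa s) (!s.ea)
    have heq : W.Pa s + bd (!s.ea) * W.Z.delta (W.Pa s) (!s.ea)
        = s.a + bd s.ea * (W.tau s - W.Z.delta (W.Pa s) (!s.ea)) := by
      rw [Pa, bd_not]; ring
    rw [heq] at hmem
    exact W.Z.delta_not s.a s.ea _ (by linarith) (by
      have := W.tau_le_a s
      linarith [W.Z.delta_pos (W.Pa s) (!s.ea)]) hmem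
  have hgeB : W.tau s ≤ W.Z.delta (W.Pb s) (!s.eb) := by
    by_contra h
    push_neg at h
    have hd := W.Z.delta_pos (W.Pb s) (!s.eb)
    have hmem := W.Z.delta_memS (W.Pb s) (!s.eb)
    have heq : W.Pb s + bd (!s.eb) * W.Z.delta (W.Pb s) (!s.eb)
        = s.b + bd s.eb * (W.tau s - W.Z.delta (W.Pb s) (!s.eb)) := by
      rw [Pb, bd_not]; ring
    rw [heq] at hmem
    exact W.Z.delta_not s.b s.eb _ (by linarith) (by
      have := W.tau_le_b s
      linarith [W.Z.delta_pos (W.Pb s) (!s.eb)]) hmem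
  have hle : W.tau (W.Dst s) ≤ W.tau s := by
    rcases hV.2.2.2.2.2.2.2.2 with hS | hS
    · have : W.Pa s + bd (!s.ea) * W.tau s = s.a := by rw [Pa, bd_not]; ring
      have hd : W.Z.delta (W.Pa s) (!s.ea) ≤ W.tau s :=
        W.Z.delta_le _ _ htp (by rw [this]; exact hS)
      calc W.tau (W.Dst s) ≤ W.Z.delta (W.Dst s).a (W.Dst s).ea := W.tau_le_a _
        _ = W.Z.delta (W.Pa s) (!s.ea) := rfl
        _ ≤ W.tau s := hd
    · have : W.Pb s + bd (!s.eb) * W.tau s = s.b := by rw [Pb, bd_not]; ring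
      have hd : W.Z.delta (W.Pb s) (!s.eb) ≤ W.tau s :=
        W.Z.delta_le _ _ htp (by rw [this]; exact hS)
      calc W.tau (W.Dst s) ≤ W.Z.delta (W.Dst s).b (W.Dst s).eb := W.tau_le_b _
        _ = W.Z.delta (W.Pb s) (!s.eb) := rfl
        _ ≤ W.tau s := hd
  refine le_antisymm hle (le_min ?_ ?_)
  · exact hgeA
  · exact hgeB

lemma Pa_Dst {s : St} (hV : W.V s) : W.Pa (W.Dst s) = s.a := by
  rw [Pa, W.tau_Dst hV]
  show W.Pa s + bd (!s.ea) * W.tau s = s.a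
  rw [Pa, bd_not]; ring

lemma Pb_Dst {s : St} (hV : W.V s) : W.Pb (W.Dst s) = s.b := by
  rw [Pb, W.tau_Dst hV]
  show W.Pb s + bd (!s.eb) * W.tau s = s.b
  rw [Pb, bd_not]; ring

lemma V_Dst {s : St} (hV : W.V s) : W.V (W.Dst s) := by
  have harr := W.arr_at hV
  have hbdA : W.r - 1 ≤ W.Pa s ∧ W.Pa s ≤ W.q := W.movA hV (le_of_lt (W.tau_pos s)) le_rfl
  have hbdB : W.q ≤ W.Pb s ∧ W.Pb s ≤ W.r := W.movB hV (le_of_lt (W.tau_pos s)) le_rfl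
  refine ⟨hbdA.1, hbdA.2, hbdB.1, hbdB.2, W.FP hV, ?_, ?_, ?_, W.PS s⟩
  · exact (W.okaB_true_iff).1 harr.2.1
  · exact (W.okbB_true_iff).1 harr.2.2
  · exact (W.Ab_eq_iff).1 harr.1

lemma Dst_Dst {s : St} (hV : W.V s) : W.Dst (W.Dst s) = s := by
  ext
  · exact W.Pa_Dst hV
  · exact W.Pb_Dst hV
  · simp [Dst]
  · simp [Dst]

lemma T_rev {s : St} (hV : W.V s) : W.Tst (W.Dst (W.Tst s)) = W.Dst s := by
  have hVT := W.V_Tst hV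
  have hPa : W.Pa (W.Dst (W.Tst s)) = W.Pa s := W.Pa_Dst hVT
  have hPb : W.Pb (W.Dst (W.Tst s)) = W.Pb s := W.Pb_Dst hVT
  have hrev := ruleCore_rev (fun e => W.Ab (W.Pa s) e) (fun e => W.Ab (W.Pb s) e)
    (fun e => W.okaB (W.Pa s) e) (fun e => W.okbB (W.Pb s) e) (s.ea, s.eb)
    (W.constraints_at hV) (W.arr_at hV)
  have hdirs : W.Tdir (W.Dst (W.Tst s)) = (!s.ea, !s.eb) := by
    rw [Tdir, hPa, hPb]
    have h1 : (W.Dst (W.Tst s)).ea = !(W.Tdir s).1 := rfl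
    have h2 : (W.Dst (W.Tst s)).eb = !(W.Tdir s).2 := rfl
    rw [h1, h2]
    exact hrev
  rw [Tst, hPa, hPb, hdirs]
  rfl

lemma T_inj {s1 s2 : St} (h1 : W.V s1) (h2 : W.V s2) (h : W.Tst s1 = W.Tst s2) :
    s1 = s2 := by
  have e1 : W.Dst (W.Tst (W.Dst (W.Tst s1))) = s1 := by
    rw [W.T_rev h1]; exact W.Dst_Dst h1
  have e2 : W.Dst (W.Tst (W.Dst (W.Tst s2))) = s2 := by
    rw [W.T_rev h2]; exact W.Dst_Dst h2
  rw [← e1, ← e2, h]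

noncomputable def init : St := ⟨W.q, W.q, false, true⟩

lemma V_init : W.V W.init := by
  refine ⟨show W.r - 1 ≤ W.q by linarith [W.hrq], le_rfl, le_rfl, le_of_lt W.hqr, rfl, ?_, ?_, ?_, Or.inl W.qS⟩
  · show W.OkA W.q false
    rw [OkA, cond_false]; linarith [W.hrq]
  · show W.OkB W.q true
    rw [OkB, cond_true]; exact W.hqr
  · show W.Z.slope W.q false * bd false = W.Z.slope W.q true * bd true
    rw [W.slope_min W.Fq false, W.slope_min W.Fq true]

noncomputable def orbit (n : ℕ) : St := W.Tst^[n] W.init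

lemma orbit_succ (n : ℕ) : W.orbit (n + 1) = W.Tst (W.orbit n) := by
  rw [orbit, orbit, Function.iterate_succ_apply']

lemma V_orbit (n : ℕ) : W.V (W.orbit n) := by
  induction n with
  | zero => exact W.V_init
  | succ k ih => rw [orbit_succ]; exact W.V_Tst ih

lemma pos_finite : Set.Finite {s : St |
    (W.r - 1 ≤ s.a ∧ s.a ≤ W.q ∧ W.q ≤ s.b ∧ s.b ≤ W.r) ∧
    W.Z.F s.a = W.Z.F s.b ∧ (s.a ∈ W.Z.S ∨ s.b ∈ W.Z.S)} := by
  classical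
  set PA : Set (ℝ × ℝ) := ⋃ a ∈ (W.Z.S ∩ Set.Icc (W.r - 1) W.q),
    {a} ×ˢ {y : ℝ | y ∈ Set.Icc W.q W.r ∧ W.Z.F y = W.Z.F a} with hPA
  set PB : Set (ℝ × ℝ) := ⋃ b ∈ (W.Z.S ∩ Set.Icc W.q W.r),
    {x : ℝ | x ∈ Set.Icc (W.r - 1) W.q ∧ W.Z.F x = W.Z.F b} ×ˢ {b} with hPB
  have hPAfin : PA.Finite :=
    Set.Finite.biUnion (W.Z.fin _ _)
      (fun a _ => (Set.finite_singleton a).prod (W.Z.level_finite _ _ _))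
  have hPBfin : PB.Finite :=
    Set.Finite.biUnion (W.Z.fin _ _)
      (fun b _ => (W.Z.level_finite _ _ _).prod (Set.finite_singleton b))
  have himg : {s : St |
      (W.r - 1 ≤ s.a ∧ s.a ≤ W.q ∧ W.q ≤ s.b ∧ s.b ≤ W.r) ∧
      W.Z.F s.a = W.Z.F s.b ∧ (s.a ∈ W.Z.S ∨ s.b ∈ W.Z.S)} ⊆
      (fun x : (ℝ × ℝ) × Bool × Bool => St.mk x.1.1 x.1.2 x.2.1 x.2.2) ''
        ((PA ∪ PB) ×ˢ (Set.univ : Set (Bool × Bool))) := by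
    rintro s ⟨⟨h1, h2, h3, h4⟩, h5, h6⟩
    refine ⟨((s.a, s.b), (s.ea, s.eb)), ⟨?_, Set.mem_univ _⟩, rfl⟩
    rcases h6 with h6 | h6
    · left
      rw [hPA]
      exact Set.mem_biUnion ⟨h6, h1, h2⟩ ⟨rfl, ⟨h3, h4⟩, h5.symm⟩
    · right
      rw [hPB]
      exact Set.mem_biUnion ⟨h6, h3, h4⟩ ⟨⟨⟨h1, h2⟩, h5⟩, rfl⟩
  exact Set.Finite.subset (Set.Finite.image _ (Set.Finite.prod (hPAfin.union hPBfin)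
    (Set.finite_univ))) himg

lemma orbit_back : ∀ m n : ℕ, m ≤ n → W.orbit m = W.orbit n →
    W.orbit 0 = W.orbit (n - m) := by
  intro m
  induction m with
  | zero => intro n _ h; simpa using h
  | succ k ih =>
      intro n hmn h
      obtain ⟨n', rfl⟩ : ∃ n', n = n' + 1 := ⟨n - 1, by omega⟩
      have h2 : W.orbit k = W.orbit n' := by
        apply W.T_inj (W.V_orbit k) (W.V_orbit n')
        rw [← W.orbit_succ, ← W.orbit_succ]
        exact h
      have := ih n' (by omega) h2
      simpa using this

lemma exists_return : ∃ p : ℕ, 0 < p ∧ W.orbit p = W.init := by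
  have hmaps : Set.MapsTo W.orbit (Set.univ : Set ℕ) {s : St |
      (W.r - 1 ≤ s.a ∧ s.a ≤ W.q ∧ W.q ≤ s.b ∧ s.b ≤ W.r) ∧
      W.Z.F s.a = W.Z.F s.b ∧ (s.a ∈ W.Z.S ∨ s.b ∈ W.Z.S)} := by
    intro n _
    have hV := W.V_orbit n
    exact ⟨⟨hV.1, hV.2.1, hV.2.2.1, hV.2.2.2.1⟩, hV.2.2.2.2.1, hV.2.2.2.2.2.2.2.2⟩
  obtain ⟨m, _, n, _, hmn, heq⟩ :=
    Set.infinite_univ.exists_ne_map_eq_of_mapsTo hmaps W.pos_finite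
  rcases Nat.lt_or_ge m n with h | h
  · refine ⟨n - m, by omega, ?_⟩
    have := W.orbit_back m n (le_of_lt h) heq
    rw [← this]; rfl
  · have hlt : n < m := by omega
    refine ⟨m - n, by omega, ?_⟩
    have := W.orbit_back n m (le_of_lt hlt) heq.symm
    rw [← this]; rfl

def Goal (s : St) : Prop := W.Pa s = W.r - 1 ∧ W.Pb s = W.r

lemma ea_of_arrive_q {s : St} (hV : W.V s) (hPa : W.Pa s = W.q) : s.ea = true := by
  have h := (W.arr_at hV).2.1
  rw [W.okaB_true_iff] at h
  cases he : s.ea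
  · exfalso
    rw [he, Bool.not_false, OkA, cond_true, hPa] at h
    exact lt_irrefl _ h
  · rfl

lemma eb_of_arrive_q {s : St} (hV : W.V s) (hPb : W.Pb s = W.q) : s.eb = false := by
  have h := (W.arr_at hV).2.2
  rw [W.okbB_true_iff] at h
  cases he : s.eb
  · rfl
  · exfalso
    rw [he, Bool.not_true, OkB, cond_false, hPb] at h
    exact lt_irrefl _ h

lemma Tst_eq_init {s : St} (hV : W.V s) (hPa : W.Pa s = W.q) (hPb : W.Pb s = W.q) :
    W.Tst s = W.init := by
  have hVT := W.V_Tst hV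
  have hea : (W.Tst s).ea = false := by
    cases he : (W.Tst s).ea
    · rfl
    · exfalso
      have := hVT.2.2.2.2.2.1
      rw [he, OkA, cond_true] at this
      have ha : (W.Tst s).a = W.q := hPa
      rw [ha] at this
      exact lt_irrefl _ this
  have heb : (W.Tst s).eb = true := by
    cases he : (W.Tst s).eb
    · exfalso
      have := hVT.2.2.2.2.2.2.1
      rw [he, OkB, cond_false] at this
      have hb : (W.Tst s).b = W.q := hPb
      rw [hb] at this
      exact lt_irrefl _ this
    · rfl
  ext
  · exact hPa
  · exact hPb
  · rw [hea]; rfl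
  · rw [heb]; rfl

theorem reach_goal : ∃ n : ℕ, W.Goal (W.orbit n) := by
  classical
  by_contra hno
  push_neg at hno
  have hex := W.exists_return
  set p0 := Nat.find hex with hp0def
  have hp0 := Nat.find_spec hex
  set P := p0 - 1 with hPdef
  have hP1 : P + 1 = p0 := by omega
  have hTinit : W.Tst (W.orbit P) = W.init := by
    rw [← W.orbit_succ, hP1]; exact hp0.2
  have hPaP : W.Pa (W.orbit P) = W.q := congrArg St.a hTinit
  have hPbP : W.Pb (W.orbit P) = W.q := congrArg St.b hTinit
  have base : W.orbit 0 = W.Dst (W.orbit P) := by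
    have heaP := W.ea_of_arrive_q (W.V_orbit P) hPaP
    have hebP := W.eb_of_arrive_q (W.V_orbit P) hPbP
    ext
    · show W.init.a = W.Pa (W.orbit P)
      rw [hPaP]; rfl
    · show W.init.b = W.Pb (W.orbit P)
      rw [hPbP]; rfl
    · show W.init.ea = !(W.orbit P).ea
      rw [heaP]; rfl
    · show W.init.eb = !(W.orbit P).eb
      rw [hebP]; rfl
  have palin : ∀ k, k ≤ P → W.orbit k = W.Dst (W.orbit (P - k)) := by
    intro k
    induction k with
    | zero => intro _; simpa using base
    | succ k ih =>
        intro hk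
        have hkP : k ≤ P := by omega
        have hIH := ih hkP
        have hsplit : P - k = (P - (k + 1)) + 1 := by omega
        have hrev := W.T_rev (W.V_orbit (P - (k + 1)))
        rw [← W.orbit_succ, ← hsplit] at hrev
        rw [← hIH] at hrev
        rw [← W.orbit_succ] at hrev
        exact hrev
  rcases Nat.even_or_odd P with ⟨k, hk⟩ | ⟨k, hk⟩
  · -- P = k + k : orbit k = Dst (orbit k), contradiction on direction
    have h := palin k (by omega)
    rw [show P - k = k by omega] at h
    have := congrArg St.ea h
    simp only [Dst] at this
    exact (Bool.eq_not_self _).mp this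
  · -- P = 2k + 1 : reversal at step k
    have h := palin (k + 1) (by omega)
    rw [show P - (k + 1) = k by omega] at h
    rw [W.orbit_succ] at h
    set s := W.orbit k with hs
    have hVs := W.V_orbit k
    have hdir : W.Tdir s = (!s.ea, !s.eb) := by
      have h1 := congrArg St.ea h
      have h2 := congrArg St.eb h
      simp only [Tst, Dst] at h1 h2
      exact Prod.ext h1 h2
    have hclass := ruleCore_class (fun e => W.Ab (W.Pa s) e) (fun e => W.Ab (W.Pb s) e)
      (fun e => W.okaB (W.Pa s) e) (fun e => W.okbB (W.Pb s) e) (s.ea, s.eb)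
      (W.constraints_at hVs) (W.arr_at hVs) hdir
    have hbdA : W.r - 1 ≤ W.Pa s ∧ W.Pa s ≤ W.q := W.movA hVs (le_of_lt (W.tau_pos s)) le_rfl
    have hbdB : W.q ≤ W.Pb s ∧ W.Pb s ≤ W.r := W.movB hVs (le_of_lt (W.tau_pos s)) le_rfl
    rcases hclass with ⟨h1, h2⟩ | ⟨h1, h2⟩
    · -- back at the corner (q, q) : contradicts minimality of p0
      have g1 : ¬ W.OkA (W.Pa s) true := (W.okaB_false_iff).1 h1
      have g2 : ¬ W.OkB (W.Pb s) false := (W.okbB_false_iff).1 h2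
      rw [OkA, cond_true, not_lt] at g1
      rw [OkB, cond_false, not_lt] at g2
      have hPaq : W.Pa s = W.q := le_antisymm hbdA.2 g1
      have hPbq : W.Pb s = W.q := le_antisymm g2 hbdB.1
      have : W.orbit (k + 1) = W.init := by
        rw [W.orbit_succ, ← hs]
        exact W.Tst_eq_init hVs hPaq hPbq
      have hlt : k + 1 < p0 := by omega
      exact Nat.find_min hex hlt ⟨by omega, this⟩
    · -- reached the goal corner (r-1, r) : contradicts hno
      have g1 : ¬ W.OkA (W.Pa s) false := (W.okaB_false_iff).1 h1
      have g2 : ¬ W.OkB (W.Pb s) true := (W.okbB_false_iff).1 h2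
      rw [OkA, cond_false, not_lt] at g1
      rw [OkB, cond_true, not_lt] at g2
      exact hno k ⟨le_antisymm g1 hbdA.1, le_antisymm hbdB.2 g2⟩

lemma orbit_zero : W.orbit 0 = W.init := rfl
lemma orbit_a_succ (n : ℕ) : (W.orbit (n + 1)).a = W.Pa (W.orbit n) := by
  rw [W.orbit_succ]; rfl
lemma orbit_b_succ (n : ℕ) : (W.orbit (n + 1)).b = W.Pb (W.orbit n) := by
  rw [W.orbit_succ]; rfl

noncomputable def tt : ℕ → ℝ
  | 0 => 0
  | n + 1 => tt n + W.tau (W.orbit n)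

lemma tt_zero : W.tt 0 = 0 := rfl
lemma tt_succ (n : ℕ) : W.tt (n + 1) = W.tt n + W.tau (W.orbit n) := rfl

lemma tt_nonneg : ∀ n, 0 ≤ W.tt n := by
  intro n
  induction n with
  | zero => exact le_rfl
  | succ k ih =>
      have := W.tau_pos (W.orbit k)
      rw [W.tt_succ]; linarith

lemma tt_lt_succ (n : ℕ) : W.tt n < W.tt (n + 1) := by
  have := W.tau_pos (W.orbit n)
  rw [W.tt_succ]; linarith

open Classical in
noncomputable def AF : ℕ → ℝ → ℝ
  | 0 => fun _ => W.q
  | n + 1 => fun u =>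
      if u ≤ W.tt n then AF n u else (W.orbit n).a + bd (W.orbit n).ea * (u - W.tt n)

open Classical in
lemma AF_zero : W.AF 0 = fun _ => W.q := rfl
lemma AF_succ (n : ℕ) : W.AF (n + 1) = fun u =>
    if u ≤ W.tt n then W.AF n u else (W.orbit n).a + bd (W.orbit n).ea * (u - W.tt n) := rfl

noncomputable def BF : ℕ → ℝ → ℝ
  | 0 => fun _ => W.q
  | n + 1 => fun u =>
      if u ≤ W.tt n then BF n u else (W.orbit n).b + bd (W.orbit n).eb * (u - W.tt n)

lemma BF_zero : W.BF 0 = fun _ => W.q := rfl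
lemma BF_succ (n : ℕ) : W.BF (n + 1) = fun u =>
    if u ≤ W.tt n then W.BF n u else (W.orbit n).b + bd (W.orbit n).eb * (u - W.tt n) := rfl

lemma path_pkg : ∀ n : ℕ, Continuous (W.AF n) ∧ Continuous (W.BF n) ∧
    W.AF n (W.tt n) = (W.orbit n).a ∧ W.BF n (W.tt n) = (W.orbit n).b ∧
    W.AF n 0 = W.q ∧ W.BF n 0 = W.q ∧
    ∀ u ∈ Set.Icc 0 (W.tt n),
      W.r - 1 ≤ W.AF n u ∧ W.AF n u ≤ W.q ∧ W.q ≤ W.BF n u ∧ W.BF n u ≤ W.r ∧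
      W.Z.F (W.AF n u) = W.Z.F (W.BF n u) := by
  intro n
  induction n with
  | zero =>
      rw [W.AF_zero, W.BF_zero]
      refine ⟨continuous_const, continuous_const, rfl, rfl, rfl, rfl, ?_⟩
      intro u _
      exact ⟨show W.r - 1 ≤ W.q by linarith [W.hrq], le_rfl, le_rfl, le_of_lt W.hqr, rfl⟩
  | succ k ih =>
      obtain ⟨hcA, hcB, heA, heB, h0A, h0B, hgood⟩ := ih
      set s := W.orbit k with hs
      have hV := W.V_orbit k
      have htp := W.tau_pos s
      have hAeq : W.AF (k + 1) = fun u =>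
          if u ≤ W.tt k then W.AF k u else s.a + bd s.ea * (u - W.tt k) := W.AF_succ k
      have hBeq : W.BF (k + 1) = fun u =>
          if u ≤ W.tt k then W.BF k u else s.b + bd s.eb * (u - W.tt k) := W.BF_succ k
      have hmatchA : ∀ u : ℝ, (u : ℝ) = W.tt k → W.AF k u = s.a + bd s.ea * (u - W.tt k) := by
        intro u hu; rw [hu, heA]; ring
      have hmatchB : ∀ u : ℝ, (u : ℝ) = W.tt k → W.BF k u = s.b + bd s.eb * (u - W.tt k) := by
        intro u hu; rw [hu, heB]; ring
      have hcA' : Continuous (W.AF (k + 1)) := by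
        rw [hAeq]
        exact Continuous.if_le hcA (by continuity) continuous_id continuous_const hmatchA
      have hcB' : Continuous (W.BF (k + 1)) := by
        rw [hBeq]
        exact Continuous.if_le hcB (by continuity) continuous_id continuous_const hmatchB
      have hnotle : ¬ (W.tt (k + 1) ≤ W.tt k) := not_le.mpr (W.tt_lt_succ k)
      have heA' : W.AF (k + 1) (W.tt (k + 1)) = (W.orbit (k + 1)).a := by
        rw [hAeq]
        simp only [hnotle, if_neg, if_false]
        rw [W.orbit_a_succ, Pa]
        rw [show W.tt (k + 1) - W.tt k = W.tau s by rw [W.tt_succ]; ring]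
      have heB' : W.BF (k + 1) (W.tt (k + 1)) = (W.orbit (k + 1)).b := by
        rw [hBeq]
        simp only [hnotle, if_neg, if_false]
        rw [W.orbit_b_succ, Pb]
        rw [show W.tt (k + 1) - W.tt k = W.tau s by rw [W.tt_succ]; ring]
      have h0A' : W.AF (k + 1) 0 = W.q := by
        rw [hAeq]; simp only [W.tt_nonneg k, if_pos]; exact h0A
      have h0B' : W.BF (k + 1) 0 = W.q := by
        rw [hBeq]; simp only [W.tt_nonneg k, if_pos]; exact h0B
      refine ⟨hcA', hcB', heA', heB', h0A', h0B', ?_⟩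
      intro u hu
      by_cases hcase : u ≤ W.tt k
      · have hA : W.AF (k + 1) u = W.AF k u := by rw [hAeq]; simp only [hcase, if_pos]
        have hB : W.BF (k + 1) u = W.BF k u := by rw [hBeq]; simp only [hcase, if_pos]
        rw [hA, hB]
        exact hgood u ⟨hu.1, hcase⟩
      · push_neg at hcase
        have hA : W.AF (k + 1) u = s.a + bd s.ea * (u - W.tt k) := by
          rw [hAeq]; simp only [not_le.mpr hcase, if_neg, if_false]
        have hB : W.BF (k + 1) u = s.b + bd s.eb * (u - W.tt k) := by
          rw [hBeq]; simp only [not_le.mpr hcase, if_neg, if_false]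
        have hu1 : 0 ≤ u - W.tt k := by linarith
        have hu2 : u - W.tt k ≤ W.tau s := by
          have := hu.2
          rw [W.tt_succ] at this
          linarith
        have hmA := W.movA hV hu1 hu2
        have hmB := W.movB hV hu1 hu2
        have hmF := W.movF hV hu1 hu2
        rw [hA, hB]
        exact ⟨hmA.1, hmA.2, hmB.1, hmB.2, hmF⟩

theorem exists_path : ∃ T : ℝ, 0 < T ∧ ∃ A B : ℝ → ℝ, Continuous A ∧ Continuous B ∧
    A 0 = W.q ∧ B 0 = W.q ∧ A T = W.r - 1 ∧ B T = W.r ∧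
    ∀ t ∈ Set.Icc 0 T, W.r - 1 ≤ A t ∧ A t ≤ W.q ∧ W.q ≤ B t ∧ B t ≤ W.r ∧
      W.Z.F (A t) = W.Z.F (B t) := by
  obtain ⟨N, hN⟩ := W.reach_goal
  obtain ⟨hcA, hcB, heA, heB, h0A, h0B, hgood⟩ := W.path_pkg (N + 1)
  refine ⟨W.tt (N + 1), ?_, W.AF (N + 1), W.BF (N + 1), hcA, hcB, h0A, h0B, ?_, ?_, hgood⟩
  · have h1 := W.tt_nonneg N
    have h2 := W.tt_lt_succ N
    linarith
  · rw [heA, W.orbit_a_succ]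
    exact hN.1
  · rw [heB, W.orbit_b_succ]
    exact hN.2

end Sq

/-! ### Outer reduction -/

section Outer

lemma periodized_fin {B : Set ℝ} (hB : B.Finite) (hBb : B ⊆ Set.Icc 0 2) (x y : ℝ) :
    ({z : ℝ | ∃ n : ℤ, z - n ∈ B} ∩ Set.Icc x y).Finite := by
  have hsub : ({z : ℝ | ∃ n : ℤ, z - n ∈ B} ∩ Set.Icc x y) ⊆
      (fun p : ℝ × ℤ => p.1 + p.2) '' (B ×ˢ (Set.Icc (⌈x⌉ - 2) ⌈y⌉)) := by
    rintro z ⟨⟨n, hn⟩, hz1, hz2⟩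
    have h1 := (hBb hn).1
    have h2 := (hBb hn).2
    refine ⟨(z - n, n), ⟨hn, ?_, ?_⟩, by simp⟩
    · have hc : ⌈x⌉ ≤ n + 2 := Int.ceil_le.mpr (by push_cast; linarith)
      omega
    · have hc : (n : ℝ) ≤ y := by linarith
      have : (n : ℝ) ≤ (⌈y⌉ : ℝ) := le_trans hc (Int.le_ceil y)
      exact_mod_cast this
  exact Set.Finite.subset (Set.Finite.image _ (hB.prod (Set.finite_Icc _ _))) hsub

lemma periodized_per (B : Set ℝ) (z : ℝ) :
    z ∈ {z : ℝ | ∃ n : ℤ, z - n ∈ B} ↔ z + 1 ∈ {z : ℝ | ∃ n : ℤ, z - n ∈ B} := by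
  constructor
  · rintro ⟨n, hn⟩
    refine ⟨n + 1, ?_⟩
    have : z + 1 - ((n + 1 : ℤ) : ℝ) = z - n := by push_cast; ring
    rw [this]; exact hn
  · rintro ⟨n, hn⟩
    refine ⟨n - 1, ?_⟩
    have : z - ((n - 1 : ℤ) : ℝ) = z + 1 - n := by push_cast; ring
    rw [this]; exact hn

lemma shift_int {g : ℝ → ℝ} (hg : ∀ x : ℝ, g (x + 1) = g x) (x : ℝ) (n : ℤ) :
    g (x + n) = g x := by
  induction n using Int.induction_on with
  | zero => simp
  | succ k ih =>
      have h1 : x + ((k : ℤ) + 1 : ℤ) = (x + (k : ℤ)) + 1 := by push_cast; ring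
      rw [h1, hg]; exact ih
  | pred k ih =>
      have h1 : x + (-(k : ℤ) : ℤ) = (x + (-(k : ℤ) - 1 : ℤ)) + 1 := by push_cast; ring
      rw [h1, hg] at ih; exact ih

theorem mountain_climbing_circle' (f : ℝ → ℝ)
    (hper : Function.Periodic f 1)
    (hval : ∀ x, f x = -1 ∨ f x = 1)
    (hdisc : {x | x ∈ Set.Ico (0:ℝ) 1 ∧ ¬ ContinuousAt f x}.Finite)
    (hint : ∫ x in (0:ℝ)..1, f x = 0) :
    ∃ T : ℝ, 0 < T ∧ ∃ a b : ℝ → ℝ,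
      ContinuousOn a (Set.Icc 0 T) ∧ ContinuousOn b (Set.Icc 0 T) ∧
      a 0 = b 0 ∧
      (∀ t ∈ Set.Icc (0:ℝ) T,
        a t ≤ b t ∧ b t ≤ a t + 1 ∧ (∫ x in (a t)..(b t), f x) = 0) ∧
      b T = a T + 1 := by
  classical
  set D0 : Set ℝ := {x | x ∈ Set.Ico (0:ℝ) 1 ∧ ¬ ContinuousAt f x} with hD0def
  set Dall : Set ℝ := {z : ℝ | ∃ n : ℤ, z - n ∈ D0} with hDalldef
  have hfint : ∀ (w : ℝ) (n : ℤ), f (w + n) = f w := shift_int hper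
  -- continuity off Dall
  have contD : ∀ z : ℝ, z ∉ Dall → ContinuousAt f z := by
    intro z hz
    have hfr : Int.fract z ∉ D0 := by
      intro hmem
      exact hz ⟨⌊z⌋, hmem⟩
    have hfr2 : Int.fract z ∈ Set.Ico (0:ℝ) 1 := ⟨Int.fract_nonneg z, Int.fract_lt_one z⟩
    have hca : ContinuousAt f (Int.fract z) := by
      by_contra hc
      exact hfr ⟨hfr2, hc⟩
    have heq : (fun w : ℝ => f (w - (⌊z⌋ : ℝ))) = f := by
      funext w
      have := hfint (w - (⌊z⌋ : ℝ)) ⌊z⌋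
      rw [show w - (⌊z⌋ : ℝ) + (⌊z⌋ : ℝ) = w by ring] at this
      exact this.symm
    have hc2 : ContinuousAt (fun w : ℝ => f (w - (⌊z⌋ : ℝ))) z := by
      apply ContinuousAt.comp
      · rw [show z - (⌊z⌋ : ℝ) = Int.fract z from rfl]; exact hca
      · exact (continuous_sub_right _).continuousAt
    rwa [heq] at hc2
  -- countability and measurability
  have hDcount : Dall.Countable := by
    have : Dall = ⋃ n : ℤ, (fun d => d + (n : ℝ)) '' D0 := by
      ext z
      simp only [hDalldef, Set.mem_setOf_eq, Set.mem_iUnion, Set.mem_image]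
      constructor
      · rintro ⟨n, hn⟩; exact ⟨n, z - n, hn, by ring⟩
      · rintro ⟨n, d, hd, rfl⟩; exact ⟨n, by simpa using hd⟩
    rw [this]
    exact Set.countable_iUnion (fun n => (hdisc.countable).image _)
  have hAESM : MeasureTheory.AEStronglyMeasurable f MeasureTheory.volume := by
    have h1 : AEMeasurable f (MeasureTheory.volume.restrict Dallᶜ) :=
      ContinuousOn.aemeasurable (fun z hz => (contD z hz).continuousWithinAt)
        hDcount.measurableSet.compl
    have h0 : MeasureTheory.volume Dall = 0 := hDcount.measure_zero _
    have h2 : MeasureTheory.volume.restrict Dallᶜ = MeasureTheory.volume := by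
      apply MeasureTheory.Measure.restrict_eq_self_of_ae_mem
      rw [MeasureTheory.ae_iff]
      simpa using h0
    rw [h2] at h1
    exact h1.aestronglyMeasurable
  have hbound : ∀ x, ‖f x‖ ≤ 1 := by
    intro x
    rcases hval x with h | h <;> rw [h] <;> simp
  have hInt : ∀ u v : ℝ, IntervalIntegrable f MeasureTheory.volume u v := by
    intro u v
    rw [intervalIntegrable_iff]
    refine MeasureTheory.Integrable.mono' ?_ hAESM.restrict
      (Filter.Eventually.of_forall hbound)
    refine (MeasureTheory.integrableOn_const_iff).2 (Or.inr ?_)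
    rw [Set.uIoc]
    exact measure_Ioc_lt_top
  -- the primitive F
  set F : ℝ → ℝ := fun x => ∫ t in (0:ℝ)..x, f t with hFdef
  have hFsub : ∀ u v : ℝ, F v - F u = ∫ t in u..v, f t := by
    intro u v
    exact intervalIntegral.integral_interval_sub_left (hInt 0 v) (hInt 0 u)
  have hper1 : ∀ x : ℝ, F (x + 1) = F x := by
    intro x
    have h1 := hper.intervalIntegral_add_eq x 0
    rw [zero_add] at h1
    have h2 := hFsub x (x + 1)
    rw [h1, hint] at h2
    linarith
  have hFper : ∀ (x : ℝ) (n : ℤ), F (x + n) = F x := shift_int hper1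
  have hFc : Continuous F := by
    rw [Metric.continuous_iff]
    intro x ε hε
    refine ⟨ε, hε, fun y hy => ?_⟩
    have h1 := hFsub y x
    have h2 : ‖∫ t in y..x, f t‖ ≤ 1 * |x - y| :=
      intervalIntegral.norm_integral_le_of_norm_le_const (fun t _ => hbound t)
    rw [← h1] at h2
    have h3 : |F x - F y| ≤ |x - y| := by rwa [Real.norm_eq_abs, one_mul] at h2
    rw [Real.dist_eq] at hy ⊢
    calc |F y - F x| = |F x - F y| := abs_sub_comm _ _
      _ ≤ |x - y| := h3
      _ = |y - x| := abs_sub_comm _ _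
      _ < ε := hy
  -- min and max over a period
  obtain ⟨q, hqIcc, hqmin⟩ := isCompact_Icc.exists_isMinOn (s := Set.Icc (0:ℝ) 1)
    ⟨0, by norm_num⟩ hFc.continuousOn
  obtain ⟨r0, hr0Icc, hr0max⟩ := isCompact_Icc.exists_isMaxOn (s := Set.Icc (0:ℝ) 1)
    ⟨0, by norm_num⟩ hFc.continuousOn
  set m : ℝ := F q with hmdef
  set M : ℝ := F r0 with hMdef
  have hFfract : ∀ x : ℝ, F x = F (Int.fract x) := by
    intro x
    have := hFper (Int.fract x) ⌊x⌋
    rw [show Int.fract x + (⌊x⌋ : ℝ) = x by rw [Int.fract]; ring] at this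
    exact this
  have hbnd : ∀ x : ℝ, m ≤ F x ∧ F x ≤ M := by
    intro x
    have hf : Int.fract x ∈ Set.Icc (0:ℝ) 1 :=
      ⟨Int.fract_nonneg x, le_of_lt (Int.fract_lt_one x)⟩
    constructor
    · rw [hFfract x]; exact hqmin hf
    · rw [hFfract x]; exact hr0max hf
  -- generic affineness
  have genaff : ∀ SS : Set ℝ, Dall ⊆ SS → ∀ x y : ℝ, x < y → SS ∩ Set.Ioo x y = ∅ →
      ∃ σ : ℝ, (σ = 1 ∨ σ = -1) ∧ ∀ z ∈ Set.Icc x y, F z = F x + σ * (z - x) := by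
    intro SS hSS x y hxy hempty
    have hcont : ∀ z ∈ Set.Ioo x y, ContinuousAt f z := by
      intro z hz
      refine contD z (fun hmem => ?_)
      exact Set.eq_empty_iff_forall_notMem.mp hempty z ⟨hSS hmem, hz⟩
    set mid := (x + y) / 2 with hmiddef
    have hmid : mid ∈ Set.Ioo x y := ⟨by rw [hmiddef]; linarith, by rw [hmiddef]; linarith⟩
    have hconst : ∀ z ∈ Set.Ioo x y, f z = f mid := by
      intro z hz
      by_contra hne
      have hopp : (0:ℝ) ∈ Set.uIcc (f z) (f mid) := by
        rcases hval z with h1 | h1 <;> rcases hval mid with h2 | h2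
        · exact absurd (h1.trans h2.symm) hne
        · rw [h1, h2, Set.uIcc_of_le (by norm_num)]; norm_num
        · rw [h1, h2, Set.uIcc_of_ge (by norm_num)]; norm_num
        · exact absurd (h1.trans h2.symm) hne
      have hsub : Set.uIcc z mid ⊆ Set.Ioo x y := by
        rcases le_total z mid with h | h
        · rw [Set.uIcc_of_le h]
          intro w hw
          exact ⟨lt_of_lt_of_le hz.1 hw.1, lt_of_le_of_lt hw.2 hmid.2⟩
        · rw [Set.uIcc_of_ge h]
          intro w hw
          exact ⟨lt_of_lt_of_le hmid.1 hw.1, lt_of_le_of_lt hw.2 hz.2⟩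
      have hcont2 : ContinuousOn f (Set.uIcc z mid) :=
        fun w hw => (hcont w (hsub hw)).continuousWithinAt
      obtain ⟨w, _, hw0⟩ := intermediate_value_uIcc hcont2 hopp
      rcases hval w with h | h <;> rw [hw0] at h <;> norm_num at h
    refine ⟨f mid, (hval mid).symm, fun z hz => ?_⟩
    have h1 := hFsub x z
    have h2 : ∫ t in x..z, f t = ∫ t in x..z, (fun _ => f mid) t := by
      apply intervalIntegral.integral_congr_ae
      have hy : ∀ᵐ t : ℝ, t ≠ y := by
        rw [MeasureTheory.ae_iff]
        have hset : {t : ℝ | ¬ t ≠ y} = {y} := by ext t; simp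
        rw [hset]
        exact (Set.countable_singleton y).measure_zero _
      filter_upwards [hy] with t hty htmem
      rw [Set.uIoc_of_le hz.1] at htmem
      exact hconst t ⟨htmem.1, lt_of_le_of_ne (le_trans htmem.2 hz.2) hty⟩
    rw [h2] at h1
    rw [intervalIntegral.integral_const, smul_eq_mul] at h1
    linarith [h1]
  -- first zigzag (anchor 0) to obtain m < M
  have hD0sub : D0 ⊆ Set.Ico (0:ℝ) 1 := fun d hd => hd.1
  have hB1fin : (D0 ∪ {0} : Set ℝ).Finite := hdisc.union (Set.finite_singleton 0)
  have hB1sub : (D0 ∪ {0} : Set ℝ) ⊆ Set.Icc 0 2 := by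
    rintro d (hd | hd)
    · exact ⟨(hD0sub hd).1, by linarith [(hD0sub hd).2]⟩
    · rw [Set.mem_singleton_iff] at hd; rw [hd]; norm_num
  have hDallsub1 : Dall ⊆ {z : ℝ | ∃ n : ℤ, z - n ∈ (D0 ∪ {0} : Set ℝ)} := by
    rintro z ⟨n, hn⟩; exact ⟨n, Or.inl hn⟩
  set Z1 : ZZ := ⟨F, {z : ℝ | ∃ n : ℤ, z - n ∈ (D0 ∪ {0} : Set ℝ)}, 0,
    ⟨0, by norm_num⟩, periodized_fin hB1fin hB1sub, periodized_per _,
    fun x y hxy hempty => genaff _ hDallsub1 x y hxy hempty⟩ with hZ1def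
  have hmM : m < M := by
    rcases lt_or_eq_of_le (le_trans (hbnd q).1 (hbnd q).2) with h | h
    · exact h
    · exfalso
      have hδ := Z1.delta_pos 0 true
      have hs := Z1.slope_spec 0 true (Z1.delta 0 true) (le_of_lt hδ) le_rfl
      have hb1 := hbnd (0 + bd true * Z1.delta 0 true)
      have hb2 := hbnd 0
      have hF0 : Z1.F (0 + bd true * Z1.delta 0 true) = Z1.F 0 + Z1.slope 0 true *
        (bd true * Z1.delta 0 true) := hs
      have : Z1.slope 0 true * (bd true * Z1.delta 0 true) = 0 := by
        have e1 : Z1.F (0 + bd true * Z1.delta 0 true) = F (0 + bd true * Z1.delta 0 true) := rfl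
        have e2 : Z1.F 0 = F 0 := rfl
        rw [e1, e2] at hF0
        rw [← h] at hb1 hb2
        linarith [hb1.1, hb1.2, hb2.1, hb2.2]
      rw [bd_t, one_mul] at this
      rcases mul_eq_zero.mp this with h2 | h2
      · exact Z1.slope_ne _ _ h2
      · linarith
  -- the max point r in (q, q+1)
  have hr0q : r0 - q ∉ Set.range ((↑) : ℤ → ℝ) := by
    rintro ⟨k, hk⟩
    have : F r0 = F q := by
      have := hFper q k
      rw [show q + (k : ℝ) = r0 by linarith [hk]] at this
      exact this
    rw [← hmdef, ← hMdef] at this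
    exact absurd this (ne_of_gt hmM)
  set r : ℝ := q + Int.fract (r0 - q) with hrdef
  have hfr_pos : 0 < Int.fract (r0 - q) := by
    rcases lt_or_eq_of_le (Int.fract_nonneg (r0 - q)) with h | h
    · exact h
    · exfalso
      apply hr0q
      refine ⟨⌊r0 - q⌋, ?_⟩
      have : Int.fract (r0 - q) = 0 := h.symm
      rw [Int.fract] at this
      linarith
  have hqr : q < r := by rw [hrdef]; linarith
  have hrq1 : r < q + 1 := by
    rw [hrdef]
    linarith [Int.fract_lt_one (r0 - q)]
  have hFr : F r = M := by
    have := hFper r (⌊r0 - q⌋)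
    rw [show r + (⌊r0 - q⌋ : ℝ) = r0 by rw [hrdef, Int.fract]; ring] at this
    rw [hMdef]
    exact this.symm
  -- the final zigzag and square
  have hBfin : (D0 ∪ {0} ∪ {q, r} : Set ℝ).Finite :=
    (hdisc.union (Set.finite_singleton 0)).union ((Set.finite_singleton r).insert q)
  have hq01 : q ∈ Set.Icc (0:ℝ) 1 := hqIcc
  have hBsub : (D0 ∪ {0} ∪ {q, r} : Set ℝ) ⊆ Set.Icc 0 2 := by
    rintro d ((hd | hd) | hd)
    · exact ⟨(hD0sub hd).1, by linarith [(hD0sub hd).2]⟩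
    · rw [Set.mem_singleton_iff] at hd; rw [hd]; norm_num
    · rcases hd with hd | hd
      · rw [hd]; exact ⟨hq01.1, by linarith [hq01.2]⟩
      · rw [Set.mem_singleton_iff] at hd
        rw [hd]
        constructor
        · linarith [hq01.1]
        · linarith [hq01.2]
  have hDallsub : Dall ⊆ {z : ℝ | ∃ n : ℤ, z - n ∈ (D0 ∪ {0} ∪ {q, r} : Set ℝ)} := by
    rintro z ⟨n, hn⟩; exact ⟨n, Or.inl (Or.inl hn)⟩
  set Z2 : ZZ := ⟨F, {z : ℝ | ∃ n : ℤ, z - n ∈ (D0 ∪ {0} ∪ {q, r} : Set ℝ)}, 0,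
    ⟨0, by norm_num⟩, periodized_fin hBfin hBsub, periodized_per _,
    fun x y hxy hempty => genaff _ hDallsub x y hxy hempty⟩ with hZ2def
  have hFr1 : F (r - 1) = M := by
    have := hFper (r - 1) 1
    rw [show r - 1 + ((1:ℤ) : ℝ) = r by push_cast; ring] at this
    rw [← this, hFr]
  set W : Sq := ⟨Z2, q, r, m, M,
    ⟨0, by simpa using Or.inr (Or.inl rfl)⟩,
    ⟨0, by simpa using Or.inr (Or.inr rfl)⟩,
    hqr, hrq1, hbnd, rfl, hFr, hFr1⟩ with hWdef
  obtain ⟨T, hT, A, B, hcA, hcB, h0A, h0B, hTA, hTB, hgood⟩ := W.exists_path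
  refine ⟨T, hT, A, B, hcA.continuousOn, hcB.continuousOn, by rw [h0A, h0B], ?_, ?_⟩
  · intro t ht
    obtain ⟨g1, g2, g3, g4, g5⟩ := hgood t ht
    refine ⟨le_trans g2 g3, by linarith, ?_⟩
    have := hFsub (A t) (B t)
    have hFF : F (B t) = F (A t) := g5.symm
    rw [hFF] at this
    rw [← this]
    ring
  · rw [hTA, hTB]; ring

end Outer

end MCC


open MeasureTheory intervalIntegral

/-- Mountain-climbing theorem on the circle (Theorem 6): for a 1-periodic ±1-valued
function `f` with finitely many discontinuities in `[0,1)` and zero mean, there are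
continuous endpoint functions `a, b` tracing arcs of integral zero, from a single
point to the whole circle. -/
theorem mountain_climbing_circle (f : ℝ → ℝ)
    (hper : Function.Periodic f 1)
    (hval : ∀ x, f x = -1 ∨ f x = 1)
    (hdisc : {x | x ∈ Set.Ico (0:ℝ) 1 ∧ ¬ ContinuousAt f x}.Finite)
    (hint : ∫ x in (0:ℝ)..1, f x = 0) :
    ∃ T : ℝ, 0 < T ∧ ∃ a b : ℝ → ℝ,
      ContinuousOn a (Set.Icc 0 T) ∧ ContinuousOn b (Set.Icc 0 T) ∧
      a 0 = b 0 ∧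
      (∀ t ∈ Set.Icc (0:ℝ) T,
        a t ≤ b t ∧ b t ≤ a t + 1 ∧ (∫ x in (a t)..(b t), f x) = 0) ∧
      b T = a T + 1 := by
  exact MCC.mountain_climbing_circle' f hper hval hdisc hint
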